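/- The conformable derivative is local: if f and g are differentiable and agree on a neighborhood of t > 0, then T_α f(t) = T_α g(t); by contrast, there exist differentiable f, g on [0,∞) agreeing near t but with different Caputo derivatives at t. -/

import Mathlib

open Real Filter MeasureTheory Set intervalIntegral

theorem conformable_local_caputo_nonlocal (α t : ℝ) (hα : 0 < α) (hα1 : α < 1)
    (ht : 0 < t) :
    (∀ f g : ℝ → ℝ, Differentiable ℝ f → Differentiable ℝ g →
        (∀ᶠ x in nhds t, f x = g x) →
        t ^ ((1 : ℝ) - α) * deriv f t = t ^ ((1 : ℝ) - α) * deriv g t) ∧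
      ∃ f g : ℝ → ℝ, Differentiable ℝ f ∧ Differentiable ℝ g ∧
        (∀ᶠ x in nhds t, f x = g x) ∧
        (1 / Real.Gamma (1 - α)) * (∫ x in (0:ℝ)..t, deriv f x * (t - x) ^ (-α)) ≠
          (1 / Real.Gamma (1 - α)) * (∫ x in (0:ℝ)..t, deriv g x * (t - x) ^ (-α)) := by
  constructor
  · intro f g _ _ hfg
    rw [Filter.EventuallyEq.deriv_eq hfg]
  · set φ : ContDiffBump (t/4) := ⟨t/8, t/4, by positivity, by linarith⟩ with hφdef
    have hφcont : Continuous (φ : ℝ → ℝ) := φ.continuous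
    have hφ0 : ∀ x : ℝ, t/2 ≤ x → φ x = 0 := by
      intro x hx
      apply φ.zero_of_le_dist
      rw [Real.dist_eq]
      have : t/4 ≤ x - t/4 := by linarith
      calc φ.rOut = t/4 := rfl
        _ ≤ x - t/4 := this
        _ ≤ |x - t/4| := le_abs_self _
    have hφpos : ∀ x ∈ Ioo (0:ℝ) (t/2), 0 < φ x := by
      intro x hx
      apply φ.pos_of_mem_ball
      rw [Metric.mem_ball, Real.dist_eq, abs_lt]
      constructor
      · have : φ.rOut = t/4 := rfl
        rw [this]; linarith [hx.1]
      · have : φ.rOut = t/4 := rfl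
        rw [this]; linarith [hx.2]
    set f : ℝ → ℝ := fun x => ∫ y in x..t, φ y with hfdef
    have hderiv : ∀ x : ℝ, HasDerivAt f (-(φ x)) x := by
      intro x
      exact intervalIntegral.integral_hasDerivAt_left
        (hφcont.intervalIntegrable _ _)
        (hφcont.stronglyMeasurableAtFilter _ _)
        hφcont.continuousAt
    have hdf : Differentiable ℝ f := fun x => (hderiv x).differentiableAt
    have hderiveq : ∀ x : ℝ, deriv f x = -(φ x) := fun x => (hderiv x).deriv
    refine ⟨f, fun _ => 0, hdf, differentiable_const 0, ?_, ?_⟩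
    · filter_upwards [Ioi_mem_nhds (by linarith : t/2 < t)] with x hx
      have heq : EqOn (φ : ℝ → ℝ) 0 (uIcc x t) := by
        intro y hy
        have : min x t ≤ y := hy.1
        have hxt : t/2 < min x t := lt_min hx (by linarith)
        exact hφ0 y (by linarith)
      show (∫ y in x..t, φ y) = 0
      rw [intervalIntegral.integral_congr heq]
      simp
    · -- the two Caputo integrals differ
      have hGamma : 0 < Real.Gamma (1 - α) := Real.Gamma_pos_of_pos (by linarith)
      set F : ℝ → ℝ := fun x => φ x * (t - x) ^ (-α) with hFdef
      have contF : ContinuousOn F (Icc 0 (t/2)) := by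
        apply hφcont.continuousOn.mul
        apply ContinuousOn.rpow_const (by fun_prop)
        intro x hx
        left
        have := hx.2
        simp only [mem_Icc] at hx
        have : 0 < t - x := by linarith [hx.2]
        linarith
      have int1 : IntervalIntegrable F volume 0 (t/2) := by
        apply ContinuousOn.intervalIntegrable
        rwa [uIcc_of_le (by linarith)]
      have int2 : IntervalIntegrable F volume (t/2) t := by
        constructor
        · have heq : EqOn F 0 (Ioc (t/2) t) := by
            intro y hy
            simp only [hFdef, Pi.zero_apply, hφ0 y hy.1.le, zero_mul]
          exact (integrableOn_congr_fun heq measurableSet_Ioc).mpr (integrableOn_zero)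
        · rw [Ioc_eq_empty (by linarith)]
          exact integrableOn_empty
      have h2zero : (∫ x in (t/2)..t, F x) = 0 := by
        have heq : EqOn F 0 (uIcc (t/2) t) := by
          intro y hy
          rw [uIcc_of_le (by linarith)] at hy
          simp only [hFdef, Pi.zero_apply, hφ0 y hy.1, zero_mul]
        rw [intervalIntegral.integral_congr heq]
        simp
      have h1pos : 0 < ∫ x in (0:ℝ)..(t/2), F x := by
        apply intervalIntegral.intervalIntegral_pos_of_pos_on int1
        · intro x hx
          exact mul_pos (hφpos x hx) (Real.rpow_pos_of_pos (by linarith [hx.2]) _)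
        · linarith
      have hJpos : 0 < ∫ x in (0:ℝ)..t, F x := by
        rw [← intervalIntegral.integral_add_adjacent_intervals int1 int2, h2zero]
        linarith
      have hL : (∫ x in (0:ℝ)..t, deriv f x * (t - x) ^ (-α)) = -∫ x in (0:ℝ)..t, F x := by
        rw [← intervalIntegral.integral_neg]
        apply intervalIntegral.integral_congr
        intro x _
        show deriv f x * (t - x) ^ (-α) = -F x
        rw [hderiveq x]
        ring
      have hR : (∫ x in (0:ℝ)..t, deriv (fun _ : ℝ => (0:ℝ)) x * (t - x) ^ (-α)) = 0 := by
        have : ∀ x : ℝ, deriv (fun _ : ℝ => (0:ℝ)) x * (t - x) ^ (-α) = 0 := by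
          intro x; rw [deriv_const]; ring
        simp only [this, intervalIntegral.integral_zero]
      rw [hL, hR, mul_zero]
      apply ne_of_lt
      apply mul_neg_of_pos_of_neg
      · positivity
      · linarith
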